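/- Let m ∈ ℕ be even and δ ∈ F_{2^{2m}} with Tr_{2m}(δ) = 1. Then f(x) = (x² + x + δ)^{2^{2m-1} + 2^{m-1}} + x is a 2-to-1 mapping on F_{2^{2m}}. -/

import Mathlib

open Finset
section M2
variable {F : Type*} [Field F]
lemma sq_add' (h2 : (2:F) = 0) (a b : F) : (a+b)^2 = a^2 + b^2 := by
  linear_combination a*b*h2

lemma frob_add' (h2 : (2:F) = 0) (k : ℕ) (a b : F) :
    (a+b)^(2^k) = a^(2^k) + b^(2^k) := by
  induction k with
  | zero => simp
  | succ k ih =>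
    have h : (2:ℕ)^(k+1) = 2^k * 2 := by ring
    rw [h, pow_mul, pow_mul, pow_mul, ih, sq_add' h2]

lemma sq_inj' (h2 : (2:F) = 0) {a b : F} (h : a^2 = b^2) : a = b := by
  have h0 : (a - b)^2 = 0 := by linear_combination h + (b^2 - a*b)*h2
  exact sub_eq_zero.mp (pow_eq_zero_iff (n := 2) (by norm_num) |>.mp h0)

def trm (m : ℕ) (u : F) : F := ∑ i ∈ Finset.range m, u ^ 2^i

lemma trm_add (h2 : (2:F) = 0) (m : ℕ) (a b : F) :
    trm m (a+b) = trm m a + trm m b := by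
  unfold trm
  rw [← Finset.sum_add_distrib]
  exact Finset.sum_congr rfl fun i _ => frob_add' h2 i a b

lemma trm_zero (m : ℕ) : trm m (0:F) = 0 := by
  unfold trm
  apply Finset.sum_eq_zero
  intro i _
  exact zero_pow (by positivity)

lemma trm_sq {m : ℕ} {u : F} (hu : u^(2^m) = u) :
    trm m (u^2) = trm m u := by
  unfold trm
  have h1 : ∀ i : ℕ, (u^2)^(2^i) = u^(2^(i+1)) := by
    intro i
    rw [← pow_mul]
    congr 1
    ring
  rw [Finset.sum_congr rfl fun i _ => h1 i]
  have e1 : ∑ i ∈ range (m+1), u^(2^i) = (∑ i ∈ range m, u^(2^(i+1))) + u^(2^0) :=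
    Finset.sum_range_succ' _ m
  have e2 : ∑ i ∈ range (m+1), u^(2^i) = (∑ i ∈ range m, u^(2^i)) + u^(2^m) :=
    Finset.sum_range_succ _ m
  rw [e2, hu] at e1
  simp only [pow_zero, pow_one] at e1
  exact add_right_cancel e1.symm

lemma trm_one (h2 : (2:F) = 0) {m : ℕ} (hmeven : Even m) : trm m (1:F) = 0 := by
  unfold trm
  simp only [one_pow, Finset.sum_const, Finset.card_range, nsmul_eq_mul, mul_one]
  obtain ⟨k, hk⟩ := hmeven
  rw [hk]
  push_cast
  linear_combination (k:F)*h2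

lemma trm_artin (h2 : (2:F) = 0) {m : ℕ} {u : F} (hu : u^(2^m) = u) :
    trm m (u^2 + u) = 0 := by
  rw [trm_add h2, trm_sq hu]
  linear_combination (trm m u) * h2

lemma cubic_unique (h2 : (2:F) = 0) {m : ℕ} (hmeven : Even m) {t : F}
    (htr1 : trm m t = 1) {c c' : F}
    (hc : c^(2^m) = c) (hc' : c'^(2^m) = c')
    (e1 : c^3 + t*c + t = 0) (e2 : c'^3 + t*c' + t = 0) : c = c' := by
  by_contra hne
  set s := c + c' with hs_def
  set p := c * c' with hp_def
  have hs : s ≠ 0 := by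
    intro h
    apply hne
    linear_combination h - c'*h2
  have key : (t - (s^2 + p)) * s = 0 := by
    linear_combination -e1 - e2 + (t*s + t - 2*c^2*c' - 2*c*c'^2)*h2
  have ht : t = s^2 + p := by
    rcases mul_eq_zero.mp key with h | h
    · linear_combination h
    · exact absurd h hs
  have hq1 : c^2 = s*c + p := by
    linear_combination (-(c*c'))*h2
  have hps : p*(s+1) = s^2 := by
    linear_combination e1 - (c+1)*ht - (c+s)*hq1 - (s^2*c + p*c + s^2)*h2
  have hs1 : s + 1 ≠ 0 := by
    intro h
    rw [h, mul_zero] at hps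
    exact hs (pow_eq_zero_iff (n := 2) (by norm_num) |>.mp hps.symm)
  have hsq : s^(2^m) = s := by
    rw [hs_def, frob_add' h2, hc, hc']
  have huq : (c*s⁻¹)^(2^m) = c*s⁻¹ := by
    rw [mul_pow, inv_pow, hsq, hc]
  have hu2 : (c*s⁻¹)^2 + c*s⁻¹ = (s+1)⁻¹ := by
    have hv : s * s⁻¹ = 1 := mul_inv_cancel₀ hs
    apply eq_inv_of_mul_eq_one_left
    linear_combination (s⁻¹^2*(s+1))*hq1 + s⁻¹^2*hps + (s*s⁻¹+1 - c*s⁻¹*(s+1))*hv + (s*c*(s+1)*s⁻¹^2)*h2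
  have htrv : trm m ((s+1)⁻¹ : F) = 0 := by
    rw [← hu2]
    exact trm_artin h2 huq
  have htform : t = (s^2 + s) + (1 + (s+1)⁻¹) := by
    field_simp
    linear_combination (1+s)*ht + hps - (1+s)*h2
  have : trm m t = 0 := by
    rw [htform, trm_add h2, trm_add h2, trm_add h2]
    have hA : trm m (s^2) = trm m s := trm_sq hsq
    have hS : trm m s = trm m c + trm m c' := trm_add h2 m c c'
    have hD : trm m (1 + (s+1)⁻¹) = trm m 1 + trm m ((s+1)⁻¹) := trm_add h2 m 1 _
    linear_combination hA + hS + hD + trm_one h2 hmeven + htrv + (trm m c + trm m c')*h2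
  rw [htr1] at this
  exact one_ne_zero this

lemma add_one_ne (h2 : (2:F) = 0) {c : F} (hc1 : c ≠ 1) : c + 1 ≠ 0 := by
  intro h
  apply hc1
  linear_combination h - h2

lemma gdecomp (h2 : (2:F) = 0) {c : F} (hc1 : c + 1 ≠ 0) :
    c^3*(c+1)⁻¹ = (c^2 + c) + (1 + (c+1)⁻¹) := by
  field_simp
  linear_combination (-1 - c - c^2)*h2

lemma tr_g (h2 : (2:F) = 0) {m : ℕ} (hmeven : Even m) {c : F} (hc1 : c + 1 ≠ 0)
    (hc : c^(2^m) = c) :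
    trm m (c^3*(c+1)⁻¹) = trm m ((c+1)⁻¹) := by
  rw [gdecomp h2 hc1]
  rw [trm_add h2 m (c^2+c) (1+(c+1)⁻¹), trm_add h2 m 1 ((c+1)⁻¹),
    trm_artin h2 hc, trm_one h2 hmeven]
  ring

lemma cubic_exists [Fintype F] [DecidableEq F] (h2 : (2:F) = 0) {m : ℕ}
    (hmeven : Even m) {t : F} (ht : t^(2^m) = t) (htr1 : trm m t = 1) :
    ∃ c : F, c^(2^m) = c ∧ c^3 + t*c + t = 0 := by
  classical
  set q := 2^m with hq_def
  set A : Finset F := univ.filter (fun c : F => c^q = c ∧ c ≠ 1 ∧ trm m (c^3*(c+1)⁻¹) = 1) with hA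
  set B : Finset F := univ.filter (fun u : F => u^q = u ∧ trm m u = 1) with hB
  have hinvK : ∀ x : F, x^q = x → (x⁻¹)^q = x⁻¹ := by
    intro x hx
    rw [inv_pow, hx]
  have cardAB : A.card = B.card := by
    apply Finset.card_bij (fun c _ => (c+1)⁻¹)
    · intro c hcA
      simp only [hA, mem_filter, mem_univ, true_and] at hcA
      obtain ⟨hcq, hcne, hctr⟩ := hcA
      have hc1 : c + 1 ≠ 0 := add_one_ne h2 hcne
      simp only [hB, mem_filter, mem_univ, true_and]
      constructor
      · rw [inv_pow]
        congr 1
        rw [frob_add' h2, hcq, one_pow]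
      · rw [← tr_g h2 hmeven hc1 hcq]
        exact hctr
    · intro c hc c' hc' h
      have := inv_injective h
      exact add_right_cancel this
    · intro u huB
      simp only [hB, mem_filter, mem_univ, true_and] at huB
      obtain ⟨huq, hutr⟩ := huB
      have hu0 : u ≠ 0 := by
        intro h
        rw [h, trm_zero] at hutr
        exact one_ne_zero hutr.symm
      refine ⟨u⁻¹ + 1, ?_, ?_⟩
      · simp only [hA, mem_filter, mem_univ, true_and]
        have hkey : u⁻¹ + 1 + 1 = u⁻¹ := by linear_combination h2
        have hne1 : u⁻¹ + 1 ≠ 1 := by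
          intro h
          have : u⁻¹ = 0 := by linear_combination h
          exact inv_ne_zero hu0 this
        have hc1 : (u⁻¹ + 1) + 1 ≠ 0 := by
          rw [hkey]; exact inv_ne_zero hu0
        refine ⟨?_, hne1, ?_⟩
        · rw [frob_add' h2, hinvK u huq, one_pow]
        · rw [tr_g h2 hmeven hc1 (by rw [frob_add' h2, hinvK u huq, one_pow]), hkey, inv_inv]
          exact hutr
      · have hkey : u⁻¹ + 1 + 1 = u⁻¹ := by linear_combination h2
        rw [hkey, inv_inv]
  set g : F → F := fun c => c^3*(c+1)⁻¹ with hg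
  have hAmem : ∀ c : F, c ∈ A ↔ c^q = c ∧ c ≠ 1 ∧ trm m (g c) = 1 := by
    intro c
    simp [hA, hg]
  have hroot : ∀ c : F, c ≠ 1 → c^3 + (g c)*c + (g c) = 0 := by
    intro c hcne
    have hc1 : c + 1 ≠ 0 := add_one_ne h2 hcne
    have hv : (c+1)⁻¹ * (c+1) = 1 := inv_mul_cancel₀ hc1
    simp only [hg]
    linear_combination c^3 * hv + c^3 * h2
  have hgK : ∀ c : F, c^q = c → (g c)^q = g c := by
    intro c hcq
    simp only [hg]
    rw [mul_pow, inv_pow, pow_right_comm, hcq, frob_add' h2, hcq, one_pow]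
  have himg : A.image g ⊆ B := by
    intro u hu
    obtain ⟨c, hcA, hgc⟩ := mem_image.mp hu
    obtain ⟨hcq, hcne, hctr⟩ := (hAmem c).mp hcA
    simp only [hB, mem_filter, mem_univ, true_and]
    rw [← hgc]
    exact ⟨hgK c hcq, hctr⟩
  have hinj : Set.InjOn g A := by
    intro c hcA c' hc'A h
    obtain ⟨hcq, hcne, hctr⟩ := (hAmem c).mp hcA
    obtain ⟨hc'q, hc'ne, _⟩ := (hAmem c').mp hc'A
    have r1 : c^3 + (g c)*c + (g c) = 0 := hroot c hcne
    have r2 : c'^3 + (g c)*c' + (g c) = 0 := by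
      rw [h]; exact hroot c' hc'ne
    exact cubic_unique h2 hmeven hctr hcq hc'q r1 r2
  have hcardimg : (A.image g).card = A.card := Finset.card_image_of_injOn hinj
  have heq : A.image g = B := by
    apply Finset.eq_of_subset_of_card_le himg
    rw [hcardimg, cardAB]
  have htB : t ∈ B := by
    simp only [hB, mem_filter, mem_univ, true_and]
    exact ⟨ht, htr1⟩
  rw [← heq] at htB
  obtain ⟨c, hcA, hgc⟩ := mem_image.mp htB
  obtain ⟨hcq, hcne, _⟩ := (hAmem c).mp hcA
  refine ⟨c, hcq, ?_⟩
  rw [← hgc]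
  exact hroot c hcne
lemma exp_helper {m : ℕ} (hm : 0 < m) : (2^(2*m-1)+2^(m-1))*2 = 2^(2*m) + 2^m := by
  rw [add_mul, ← pow_succ, ← pow_succ]
  congr 1 <;> congr 1 <;> omega

lemma frob2 {m : ℕ} (hQ : ∀ z : F, z^(2^(2*m)) = z) (w : F) :
    (w^(2^m))^(2^m) = w := by
  rw [← pow_mul, ← pow_add]
  have : m + m = 2*m := by omega
  rw [this]
  exact hQ w

lemma pow_e_sq {m : ℕ} (hm : 0 < m) (hQ : ∀ z : F, z^(2^(2*m)) = z) (w : F) :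
    (w^(2^(2*m-1)+2^(m-1)))^2 = w * w^(2^m) := by
  rw [← pow_mul, exp_helper hm, pow_add, hQ]

lemma pow_e_K {m : ℕ} (h2 : (2:F) = 0) (hm : 0 < m) (hQ : ∀ z : F, z^(2^(2*m)) = z)
    (w : F) : (w^(2^(2*m-1)+2^(m-1)))^(2^m) = w^(2^(2*m-1)+2^(m-1)) := by
  apply sq_inj' h2
  rw [pow_right_comm, pow_e_sq hm hQ, mul_pow, frob2 hQ]
  exact mul_comm _ _

lemma trd_lemma (h2 : (2:F) = 0) {m : ℕ} {δ : F}
    (htr : ∑ i ∈ Finset.range (2*m), δ^(2^i) = 1) :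
    trm m (δ + δ^(2^m)) = 1 := by
  rw [trm_add h2]
  have h1 : ∀ i : ℕ, (δ^(2^m))^(2^i) = δ^(2^(m+i)) := by
    intro i
    rw [← pow_mul, ← pow_add]
  have h3 : trm m (δ^(2^m)) = ∑ i ∈ Ico m (2*m), δ^(2^i) := by
    unfold trm
    rw [Finset.sum_congr rfl fun i _ => h1 i, Finset.sum_Ico_eq_sum_range]
    have : 2*m - m = m := by omega
    rw [this]
  rw [h3]
  unfold trm
  rw [Finset.range_eq_Ico, Finset.sum_Ico_consecutive _ (Nat.zero_le m) (by omega :  m ≤ 2*m)]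
  rw [← Finset.range_eq_Ico]
  exact htr

lemma fiber_card [Fintype F] [DecidableEq F] (h2 : (2:F) = 0) {m : ℕ} (hm : 0 < m)
    (hmeven : Even m) (hQ : ∀ z : F, z^(2^(2*m)) = z) {δ : F}
    (htrd : trm m (δ + δ^(2^m)) = 1) (f : F → F)
    (hf : ∀ x, f x = (x^2+x+δ)^(2^(2*m-1)+2^(m-1)) + x) (x : F) :
    (univ.filter (fun y : F => f y = f x)).card = 2 := by
  classical
  obtain ⟨z, hz⟩ : ∃ z : F, z = x^2+x+δ := ⟨_, rfl⟩
  obtain ⟨t, htdef⟩ : ∃ t : F, t = z + z^(2^m) := ⟨_, rfl⟩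
  have htK : t^(2^m) = t := by
    rw [htdef, frob_add' h2, frob2 hQ]
    ring
  have hw : (x + x^(2^m))^(2^m) = x + x^(2^m) := by
    rw [frob_add' h2, frob2 hQ]
    ring
  have hzq : z^(2^m) = (x^(2^m))^2 + x^(2^m) + δ^(2^m) := by
    rw [hz, frob_add' h2, frob_add' h2, pow_right_comm]
  have hteq : t = (((x + x^(2^m))^2 + (x + x^(2^m))) + (δ + δ^(2^m))) := by
    rw [htdef, hzq, hz]
    linear_combination (-(x * x^(2^m)))*h2
  have htrt : trm m t = 1 := by
    rw [hteq, trm_add h2, trm_artin h2 hw, htrd, zero_add]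
  have claim : ∀ c : F, c^(2^m) = c → (f (x+c) = f x ↔ c*(c^3+t*c+t) = 0) := by
    intro c hcq
    have haq : (c^2+c)^(2^m) = c^2+c := by
      rw [frob_add' h2, pow_right_comm, hcq]
    have hzc : (x+c)^2 + (x+c) + δ = z + (c^2+c) := by
      rw [hz]; linear_combination x*c*h2
    have hstep1 : f (x+c) = f x ↔
        ((x+c)^2+(x+c)+δ)^(2^(2*m-1)+2^(m-1)) = z^(2^(2*m-1)+2^(m-1)) + c := by
      rw [hf, hf, ← hz]
      constructor
      · intro h; linear_combination h - c*h2
      · intro h; linear_combination h + c*h2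
    have hsy2 : (((x+c)^2+(x+c)+δ)^(2^(2*m-1)+2^(m-1)))^2
        = (z + (c^2+c)) * (z^(2^m) + (c^2+c)) := by
      rw [hzc, pow_e_sq hm hQ, frob_add' h2, haq]
    have hsx2 : ((z^(2^(2*m-1)+2^(m-1))) + c)^2 = z * z^(2^m) + c^2 := by
      rw [sq_add' h2, pow_e_sq hm hQ]
    have hstep2 : ((x+c)^2+(x+c)+δ)^(2^(2*m-1)+2^(m-1)) = z^(2^(2*m-1)+2^(m-1)) + c ↔
        (((x+c)^2+(x+c)+δ)^(2^(2*m-1)+2^(m-1)))^2 = ((z^(2^(2*m-1)+2^(m-1))) + c)^2 := by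
      constructor
      · intro h; rw [h]
      · exact sq_inj' h2
    have hstep3 : (((x+c)^2+(x+c)+δ)^(2^(2*m-1)+2^(m-1)))^2 = ((z^(2^(2*m-1)+2^(m-1))) + c)^2
        ↔ c*(c^3+t*c+t) = 0 := by
      rw [hsy2, hsx2, htdef]
      constructor
      · intro h; linear_combination h - c^3*h2
      · intro h; linear_combination h + c^3*h2
    exact hstep1.trans (hstep2.trans hstep3)
  have hfwd : ∀ y : F, f y = f x → (y+x)^(2^m) = y+x := by
    intro y hyx
    rw [hf, hf] at hyx
    have hc : y + x = (x^2+x+δ)^(2^(2*m-1)+2^(m-1)) + (y^2+y+δ)^(2^(2*m-1)+2^(m-1)) := by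
      linear_combination hyx + (x - (y^2+y+δ)^(2^(2*m-1)+2^(m-1)))*h2
    rw [hc, frob_add' h2, pow_e_K h2 hm hQ, pow_e_K h2 hm hQ]
  obtain ⟨c₀, hc₀q, hc₀root⟩ := cubic_exists h2 hmeven htK htrt
  have hc₀ne : c₀ ≠ 0 := by
    intro h
    rw [h] at hc₀root
    have ht0 : t = 0 := by linear_combination hc₀root
    rw [ht0, trm_zero] at htrt
    exact one_ne_zero htrt.symm
  have hfilter : univ.filter (fun y : F => f y = f x) = {x, x + c₀} := by
    ext y
    simp only [mem_filter, mem_univ, true_and, mem_insert, mem_singleton]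
    constructor
    · intro hyx
      have hcq := hfwd y hyx
      have hyeq : y = x + (y+x) := by linear_combination (-x)*h2
      have h3 : f (x + (y+x)) = f x := by rw [← hyeq]; exact hyx
      rcases mul_eq_zero.mp ((claim (y+x) hcq).mp h3) with h0 | hroot
      · left
        linear_combination h0 - x*h2
      · right
        have : y + x = c₀ := cubic_unique h2 hmeven htrt hcq hc₀q hroot hc₀root
        rw [hyeq, this]
    · intro h
      rcases h with h | h
      · rw [h]
      · rw [h]
        apply (claim c₀ hc₀q).mpr
        rw [hc₀root, mul_zero]
  rw [hfilter]
  apply Finset.card_pair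
  intro h
  exact hc₀ne (left_eq_add.mp h)
end M2

/-- For even `m` and `Tr_{2m}(δ) = 1`, `f(x) = (x²+x+δ)^{2^{2m-1}+2^{m-1}} + x` is 2-to-1
on `F_{2^{2m}}`. -/
theorem stmt11 {F : Type*} [Field F] [Fintype F] [DecidableEq F] (m : ℕ)
    (hm : 0 < m) (hmeven : Even m)
    (hcard : Fintype.card F = 2 ^ (2 * m))
    (δ : F) (htr : ∑ i ∈ Finset.range (2 * m), δ ^ (2 ^ i) = 1)
    (f : F → F)
    (hf : ∀ x, f x = (x ^ 2 + x + δ) ^ (2 ^ (2 * m - 1) + 2 ^ (m - 1)) + x) :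
    ∀ b : F, (Finset.univ.filter (fun x : F => f x = b)).card = 2 ∨
             (Finset.univ.filter (fun x : F => f x = b)).card = 0 := by
  classical
  have hchar : ringChar F = 2 := by
    obtain ⟨n, hp, hc⟩ := FiniteField.card F (ringChar F)
    rw [hcard] at hc
    have hdvd : ringChar F ∣ 2^(2*m) := hc ▸ dvd_pow_self (ringChar F) n.ne_zero
    exact (Nat.prime_dvd_prime_iff_eq hp Nat.prime_two).mp (hp.dvd_of_dvd_pow hdvd)
  have h2 : (2:F) = 0 := by
    have := CharP.cast_eq_zero F (ringChar F)
    rw [hchar] at this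
    exact_mod_cast this
  have hQ : ∀ w : F, w^(2^(2*m)) = w := fun w => by
    rw [← hcard]; exact FiniteField.pow_card w
  have htrd : trm m (δ + δ^(2^m)) = 1 := trd_lemma h2 htr
  intro b
  by_cases hb : ∃ x, f x = b
  · left
    obtain ⟨x, hx⟩ := hb
    have heq : Finset.univ.filter (fun y : F => f y = b)
        = Finset.univ.filter (fun y : F => f y = f x) := by rw [hx]
    rw [heq]
    exact fiber_card h2 hm hmeven hQ htrd f hf x
  · right
    rw [Finset.card_eq_zero, Finset.filter_eq_empty_iff]
    intro y _
    exact fun h => hb ⟨y, h⟩
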